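/- Let n ≥ 1, let M ∈ M_{n×n}(ℤ) be symmetric and positive definite, let B ∈ M_{n×n}(ℤ), and let w, s ∈ ℤⁿ with each sᵢ ≠ 0. Assume y ∈ 𝓜_{B,w}^{s}, let U ∈ M_{n×n}(ℤ) have columns forming a ℤ-basis of 𝓜_{B,0}^{s}, and let V ∈ M_{n×n}(ℤ) have columns forming a ℤ-basis of ℤy + 𝓜_{B,0}^{s}. If the smallest positive integer d with d·y ∈ 𝓜_{B,0}^{s} equals 2, then for every integer a the number of x ∈ 𝓜_{B,w}^{s} with xᵗMx = a equals the number of z ∈ ℤⁿ with zᵗ(VᵗMV)z = a minus the number of z ∈ ℤⁿ with zᵗ(UᵗMU)z = a. -/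

import Mathlib

open Matrix



-- clearing denominators
lemma aux_clear (n : ℕ) (q : Fin n → ℚ) :
    ∃ (d : ℤ) (v : Fin n → ℤ), 0 < d ∧ ∀ i, (v i : ℚ) = d * q i := by
  refine ⟨∏ i, ((q i).den : ℤ), fun i => (q i).num * ((∏ j, ((q j).den : ℤ)) / ((q i).den : ℤ)), ?_, ?_⟩
  · exact Finset.prod_pos fun i _ => Int.natCast_pos.mpr (q i).pos
  · intro i
    obtain ⟨m, hm⟩ : ((q i).den : ℤ) ∣ ∏ j, ((q j).den : ℤ) :=
      Finset.dvd_prod_of_mem _ (Finset.mem_univ i)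
    dsimp only
    have hden : ((q i).den : ℤ) ≠ 0 := Int.natCast_ne_zero.mpr (q i).den_nz
    rw [hm, Int.mul_ediv_cancel_left _ hden]
    push_cast
    rw [mul_assoc, mul_comm (↑m : ℚ) (q i), ← mul_assoc, mul_comm ((q i).den : ℚ) (q i), Rat.mul_den_eq_num]

lemma aux_nonneg_int (n : ℕ) (M : Matrix (Fin n) (Fin n) ℤ)
    (hMpos : ∀ x : Fin n → ℤ, x ≠ 0 → 0 < x ⬝ᵥ M.mulVec x) :
    ∀ v : Fin n → ℤ, 0 ≤ v ⬝ᵥ M.mulVec v := by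
  intro v
  rcases eq_or_ne v 0 with rfl | hv
  · simp
  · exact (hMpos v hv).le

lemma aux_cast_rat (n : ℕ) (M : Matrix (Fin n) (Fin n) ℤ) (v : Fin n → ℤ) :
    ((v ⬝ᵥ M.mulVec v : ℤ) : ℚ) =
      (fun i => (v i : ℚ)) ⬝ᵥ (M.map (Int.cast : ℤ → ℚ)).mulVec (fun i => (v i : ℚ)) := by
  simp only [dotProduct, Matrix.mulVec, Matrix.map_apply]
  push_cast
  rfl

lemma aux_cast_real (n : ℕ) (M : Matrix (Fin n) (Fin n) ℚ) (v : Fin n → ℚ) :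
    ((v ⬝ᵥ M.mulVec v : ℚ) : ℝ) =
      (fun i => (v i : ℝ)) ⬝ᵥ (M.map (Rat.cast : ℚ → ℝ)).mulVec (fun i => (v i : ℝ)) := by
  simp only [dotProduct, Matrix.mulVec, Matrix.map_apply]
  push_cast
  rfl

lemma aux_nonneg_rat (n : ℕ) (M : Matrix (Fin n) (Fin n) ℤ)
    (hMpos : ∀ x : Fin n → ℤ, x ≠ 0 → 0 < x ⬝ᵥ M.mulVec x) :
    ∀ q : Fin n → ℚ, 0 ≤ q ⬝ᵥ (M.map (Int.cast : ℤ → ℚ)).mulVec q := by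
  intro q
  obtain ⟨d, v, hd, hv⟩ := aux_clear n q
  have hveq : (fun i => (v i : ℚ)) = (d : ℚ) • q := by
    funext i; simp [hv i]
  have h1 : 0 ≤ ((d : ℚ) • q) ⬝ᵥ (M.map (Int.cast : ℤ → ℚ)).mulVec ((d : ℚ) • q) := by
    rw [← hveq, ← aux_cast_rat]
    exact_mod_cast aux_nonneg_int n M hMpos v
  rw [smul_dotProduct, Matrix.mulVec_smul, dotProduct_smul, smul_eq_mul, smul_eq_mul] at h1
  have hd2 : (0 : ℚ) < (d : ℚ) * (d : ℚ) := by positivity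
  nlinarith [h1]

lemma aux_cont (n : ℕ) (A : Matrix (Fin n) (Fin n) ℝ) :
    Continuous (fun x : Fin n → ℝ => x ⬝ᵥ A.mulVec x) := by
  simp only [dotProduct, Matrix.mulVec]
  fun_prop

lemma aux_nonneg_real (n : ℕ) (M : Matrix (Fin n) (Fin n) ℤ)
    (hMpos : ∀ x : Fin n → ℤ, x ≠ 0 → 0 < x ⬝ᵥ M.mulVec x) :
    ∀ x : Fin n → ℝ, 0 ≤ x ⬝ᵥ (M.map (Int.cast : ℤ → ℝ)).mulVec x := by
  set Mr := M.map (Int.cast : ℤ → ℝ) with hMr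
  have hmap : Mr = (M.map (Int.cast : ℤ → ℚ)).map (Rat.cast : ℚ → ℝ) := by
    ext i j; simp [Mr, Matrix.map_apply]
  set C : Set (Fin n → ℝ) := {x | 0 ≤ x ⬝ᵥ Mr.mulVec x} with hC
  have hCclosed : IsClosed C := isClosed_le continuous_const (aux_cont n Mr)
  have hDdense : Dense (Set.pi Set.univ fun _ : Fin n => Set.range ((↑) : ℚ → ℝ)) :=
    dense_pi Set.univ fun i _ => Rat.denseRange_cast
  have hDC : (Set.pi Set.univ fun _ : Fin n => Set.range ((↑) : ℚ → ℝ)) ⊆ C := by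
    intro x hx
    choose q hq using fun i => hx i (Set.mem_univ i)
    have hxq : x = fun i => ((q i : ℝ)) := by funext i; exact (hq i).symm
    have := aux_nonneg_rat n M hMpos q
    rw [hC, Set.mem_setOf_eq, hxq, hmap, ← aux_cast_real]
    exact_mod_cast this
  intro x
  have : x ∈ C := (hCclosed.closure_subset_iff.mpr hDC) (hDdense x)
  exact this

lemma aux_det_ne (n : ℕ) (M : Matrix (Fin n) (Fin n) ℤ)
    (hMpos : ∀ x : Fin n → ℤ, x ≠ 0 → 0 < x ⬝ᵥ M.mulVec x) :
    M.det ≠ 0 := by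
  intro hdet
  have hdetq : (M.map (Int.cast : ℤ → ℚ)).det = 0 := by
    have h1 : ((M.det : ℤ) : ℚ) = (M.map (Int.cast : ℤ → ℚ)).det :=
      RingHom.map_det (Int.castRingHom ℚ) M
    rw [← h1, hdet, Int.cast_zero]
  obtain ⟨q, hq, hq0⟩ := (Matrix.exists_mulVec_eq_zero_iff).mpr hdetq
  obtain ⟨d, v, hd, hv⟩ := aux_clear n q
  have hveq : (fun i => (v i : ℚ)) = (d : ℚ) • q := by funext i; simp [hv i]
  have hvne : v ≠ 0 := by
    intro h0
    apply hq
    funext i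
    have hthis := hv i
    rw [h0] at hthis
    simp only [Pi.zero_apply, Int.cast_zero] at hthis
    have hdne : (d : ℚ) ≠ 0 := by exact_mod_cast hd.ne'
    exact (mul_eq_zero.mp hthis.symm).resolve_left hdne
  have hMv : M.mulVec v = 0 := by
    have hcast : (fun i => ((M.mulVec v i : ℤ) : ℚ)) =
        (M.map (Int.cast : ℤ → ℚ)).mulVec (fun i => (v i : ℚ)) := by
      funext i
      simp only [Matrix.mulVec, dotProduct, Matrix.map_apply]
      push_cast
      rfl
    rw [hveq, Matrix.mulVec_smul, hq0, smul_zero] at hcast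
    funext i
    have h2 := congrFun hcast i
    simp only [Pi.zero_apply] at h2
    exact_mod_cast h2
  have := hMpos v hvne
  rw [hMv] at this
  simp at this

lemma aux_posdef_real (n : ℕ) (M : Matrix (Fin n) (Fin n) ℤ) (hMsymm : M.IsSymm)
    (hMpos : ∀ x : Fin n → ℤ, x ≠ 0 → 0 < x ⬝ᵥ M.mulVec x) :
    ∀ x : Fin n → ℝ, x ≠ 0 → 0 < x ⬝ᵥ (M.map (Int.cast : ℤ → ℝ)).mulVec x := by
  set Mr := M.map (Int.cast : ℤ → ℝ) with hMr
  have hherm : Mr.IsHermitian := by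
    ext i j
    simp only [Matrix.conjTranspose_apply, Matrix.map_apply, star_trivial, Mr]
    exact_mod_cast congrFun (congrFun hMsymm i) j
  have hpsd : Mr.PosSemidef := by
    refine Matrix.posSemidef_iff_dotProduct_mulVec.mpr ⟨hherm, fun x => ?_⟩
    simpa using aux_nonneg_real n M hMpos x
  intro x hx
  rcases lt_or_eq_of_le (aux_nonneg_real n M hMpos x) with h | h
  · exact h
  exfalso
  have h0 : Mr.mulVec x = 0 := by
    have := (hpsd.dotProduct_mulVec_zero_iff x).mp (by simpa using h.symm)
    exact this
  have hdet : Mr.det = 0 := Matrix.exists_mulVec_eq_zero_iff.mp ⟨x, hx, h0⟩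
  have : Mr.det = ((M.det : ℤ) : ℝ) :=
    (RingHom.map_det (Int.castRingHom ℝ) M).symm
  rw [this] at hdet
  exact aux_det_ne n M hMpos (by exact_mod_cast hdet)

lemma aux_coercive (n : ℕ) (hn : 1 ≤ n) (M : Matrix (Fin n) (Fin n) ℤ) (hMsymm : M.IsSymm)
    (hMpos : ∀ x : Fin n → ℤ, x ≠ 0 → 0 < x ⬝ᵥ M.mulVec x) :
    ∃ c : ℝ, 0 < c ∧
      ∀ x : Fin n → ℝ, c * ‖x‖ ^ 2 ≤ x ⬝ᵥ (M.map (Int.cast : ℤ → ℝ)).mulVec x := by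
  set Mr := M.map (Int.cast : ℤ → ℝ) with hMr
  set f : (Fin n → ℝ) → ℝ := fun x => x ⬝ᵥ Mr.mulVec x with hf
  haveI : Nontrivial (Fin n → ℝ) := by
    refine ⟨0, fun _ => 1, fun h => ?_⟩
    have := congrFun h ⟨0, hn⟩
    simp at this
  have hsne : (Metric.sphere (0 : Fin n → ℝ) 1).Nonempty :=
    NormedSpace.sphere_nonempty.mpr zero_le_one
  obtain ⟨x₀, hx₀mem, hx₀min⟩ :=
    (isCompact_sphere (0 : Fin n → ℝ) 1).exists_isMinOn hsne (aux_cont n Mr).continuousOn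
  have hx₀norm : ‖x₀‖ = 1 := by simpa using hx₀mem
  have hx₀ne : x₀ ≠ 0 := by
    intro h; rw [h, norm_zero] at hx₀norm; exact one_ne_zero hx₀norm.symm
  refine ⟨f x₀, aux_posdef_real n M hMsymm hMpos x₀ hx₀ne, fun x => ?_⟩
  rcases eq_or_ne x 0 with rfl | hx
  · simp [f]
  have ht : (0 : ℝ) < ‖x‖ := norm_pos_iff.mpr hx
  set u : Fin n → ℝ := ‖x‖⁻¹ • x with hu
  have humem : u ∈ Metric.sphere (0 : Fin n → ℝ) 1 := by
    simp [hu, norm_smul, abs_of_pos (inv_pos.mpr ht), inv_mul_cancel₀ ht.ne']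
  have hxu : x = ‖x‖ • u := by rw [hu, smul_inv_smul₀ ht.ne']
  have hfx : f x = ‖x‖ ^ 2 * f u := by
    rw [hf]
    simp only
    rw [hxu, smul_dotProduct, Matrix.mulVec_smul, dotProduct_smul, smul_eq_mul, smul_eq_mul]
    have : ‖(‖x‖ • u)‖ = ‖x‖ := by rw [← hxu]
    rw [this]; ring
  have hmin : f x₀ ≤ f u := hx₀min humem
  show f x₀ * ‖x‖ ^ 2 ≤ f x
  rw [hfx]
  have h2 : (0:ℝ) < ‖x‖ ^ 2 := by positivity
  nlinarith [h2, hmin]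

lemma aux_finite (n : ℕ) (M : Matrix (Fin n) (Fin n) ℤ) (hMsymm : M.IsSymm)
    (hMpos : ∀ x : Fin n → ℤ, x ≠ 0 → 0 < x ⬝ᵥ M.mulVec x) (a : ℤ) :
    {x : Fin n → ℤ | x ⬝ᵥ M.mulVec x = a}.Finite := by
  rcases Nat.eq_zero_or_pos n with hn0 | hn
  · subst hn0
    exact Set.toFinite _
  obtain ⟨c, hc, hcb⟩ := aux_coercive n hn M hMsymm hMpos
  set C : ℤ := ⌈(a : ℝ) / c⌉ with hC
  have hsub : {x : Fin n → ℤ | x ⬝ᵥ M.mulVec x = a} ⊆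
      Set.Icc (fun _ => -C) (fun _ => C) := by
    intro x hx
    have hxr : ((x ⬝ᵥ M.mulVec x : ℤ) : ℝ) =
        (fun i => ((x i : ℝ))) ⬝ᵥ (M.map (Int.cast : ℤ → ℝ)).mulVec (fun i => ((x i : ℝ))) := by
      simp only [dotProduct, Matrix.mulVec, Matrix.map_apply]
      push_cast
      rfl
    have hb := hcb (fun i => ((x i : ℝ)))
    rw [← hxr, hx] at hb
    have hnorm2 : ‖(fun i => ((x i : ℝ)))‖ ^ 2 ≤ (a : ℝ) / c := by
      rw [le_div_iff₀ hc]; linarith [hb]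
    have hbound : ∀ i, ((x i : ℝ)) ^ 2 ≤ (a : ℝ) / c := by
      intro i
      have h1 : |((x i : ℝ))| ≤ ‖(fun i => ((x i : ℝ)))‖ := by
        simpa using norm_le_pi_norm (fun i => ((x i : ℝ))) i
      calc ((x i : ℝ)) ^ 2 = |((x i : ℝ))| ^ 2 := (sq_abs _).symm
        _ ≤ ‖(fun i => ((x i : ℝ)))‖ ^ 2 := by
            apply pow_le_pow_left₀ (abs_nonneg _) h1
        _ ≤ (a : ℝ) / c := hnorm2
    have hboundz : ∀ i, (x i) ^ 2 ≤ C := by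
      intro i
      have h2 : ((x i : ℝ)) ^ 2 ≤ (C : ℝ) := (hbound i).trans (Int.le_ceil _)
      exact_mod_cast h2
    constructor <;> intro i <;> simp only <;> nlinarith [hboundz i, sq_nonneg (x i + 1), sq_nonneg (x i - 1)]
  exact (Set.finite_Icc _ _).subset hsub

lemma aux_card_range {α β : Type*} (f : α → β) (hf : Function.Injective f) (p : β → Prop) :
    Nat.card {z : α // p (f z)} = Nat.card {x : β // x ∈ Set.range f ∧ p x} := by
  apply Nat.card_congr
  refine Equiv.ofBijective (fun z => ⟨f z.1, ⟨z.1, rfl⟩, z.2⟩) ⟨?_, ?_⟩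
  · intro z₁ z₂ h
    exact Subtype.ext (hf (congrArg Subtype.val h))
  · rintro ⟨x, ⟨z, rfl⟩, px⟩
    exact ⟨⟨z, px⟩, rfl⟩

lemma aux_quad (n : ℕ) (M V : Matrix (Fin n) (Fin n) ℤ) (z : Fin n → ℤ) :
    z ⬝ᵥ (Vᵀ * M * V).mulVec z = (V.mulVec z) ⬝ᵥ M.mulVec (V.mulVec z) := by
  rw [← Matrix.mulVec_mulVec, ← Matrix.mulVec_mulVec, Matrix.dotProduct_mulVec,
    Matrix.vecMul_transpose]

theorem stmt_8 (n : ℕ) (hn : 1 ≤ n)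
    (M B : Matrix (Fin n) (Fin n) ℤ)
    (hMsymm : M.IsSymm)
    (hMpos : ∀ x : Fin n → ℤ, x ≠ 0 → 0 < x ⬝ᵥ M.mulVec x)
    (w s : Fin n → ℤ) (hs : ∀ i, s i ≠ 0)
    (y : Fin n → ℤ) (hy : ∀ i, s i ∣ (B.mulVec y - w) i)
    (U : Matrix (Fin n) (Fin n) ℤ)
    -- the columns of `U` form a ℤ-basis of `𝓜_{B,0}^{s}`:
    (hUmem : ∀ z : Fin n → ℤ, ∀ i, s i ∣ B.mulVec (U.mulVec z) i)
    (hUspan : ∀ x : Fin n → ℤ, (∀ i, s i ∣ B.mulVec x i) → ∃ z : Fin n → ℤ, U.mulVec z = x)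
    (hUinj : Function.Injective U.mulVec)
    (V : Matrix (Fin n) (Fin n) ℤ)
    -- the columns of `V` form a ℤ-basis of `ℤy + 𝓜_{B,0}^{s}`:
    (hVmem : ∀ z : Fin n → ℤ, ∃ c : ℤ, ∀ i, s i ∣ B.mulVec (V.mulVec z - c • y) i)
    (hVspan : ∀ x : Fin n → ℤ, (∃ c : ℤ, ∀ i, s i ∣ B.mulVec (x - c • y) i) →
      ∃ z : Fin n → ℤ, V.mulVec z = x)
    (hVinj : Function.Injective V.mulVec)
    -- the smallest positive integer `d` with `d • y ∈ 𝓜_{B,0}^{s}` equals 2: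
    (hd : IsLeast {d' : ℕ | 0 < d' ∧ ∀ i, s i ∣ B.mulVec ((d' : ℤ) • y) i} 2)
    (a : ℤ) :
    (Nat.card {x : Fin n → ℤ //
        (∀ i, s i ∣ (B.mulVec x - w) i) ∧ x ⬝ᵥ M.mulVec x = a} : ℤ) =
      (Nat.card {z : Fin n → ℤ // z ⬝ᵥ (Vᵀ * M * V).mulVec z = a} : ℤ) -
        (Nat.card {z : Fin n → ℤ // z ⬝ᵥ (Uᵀ * M * U).mulVec z = a} : ℤ) := by
  -- quadratic form
  set p : (Fin n → ℤ) → Prop := fun x => x ⬝ᵥ M.mulVec x = a with hp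
  -- ranges
  have hrangeU : Set.range U.mulVec = {x | ∀ i, s i ∣ B.mulVec x i} := by
    apply Set.eq_of_subset_of_subset
    · rintro x ⟨z, rfl⟩; exact hUmem z
    · intro x hx; exact hUspan x hx
  have hrangeV : Set.range V.mulVec = {x | ∃ c : ℤ, ∀ i, s i ∣ B.mulVec (x - c • y) i} := by
    apply Set.eq_of_subset_of_subset
    · rintro x ⟨z, rfl⟩; exact hVmem z
    · intro x hx; exact hVspan x hx
  -- 2y ∈ 𝓜
  have h2y : ∀ i, s i ∣ 2 * B.mulVec y i := by
    intro i
    have := hd.1.2 i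
    rw [Matrix.mulVec_smul] at this
    simpa using this
  -- y ∉ 𝓜
  have hyn : ¬ (∀ i, s i ∣ B.mulVec y i) := by
    intro hymem
    have h1 : (1 : ℕ) ∈ {d' : ℕ | 0 < d' ∧ ∀ i, s i ∣ B.mulVec ((d' : ℤ) • y) i} := by
      refine ⟨one_pos, fun i => ?_⟩
      rw [Matrix.mulVec_smul]
      simpa using hymem i
    have := hd.2 h1
    omega
  -- three sets
  set SU : Set (Fin n → ℤ) := {x | (∀ i, s i ∣ B.mulVec x i) ∧ p x} with hSU
  set SC : Set (Fin n → ℤ) := {x | (∀ i, s i ∣ B.mulVec (x - y) i) ∧ p x} with hSC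
  set SL : Set (Fin n → ℤ) := {x | (∃ c : ℤ, ∀ i, s i ∣ B.mulVec (x - c • y) i) ∧ p x} with hSL
  -- SL = SU ∪ SC
  have hunion : SL = SU ∪ SC := by
    apply Set.eq_of_subset_of_subset
    · rintro x ⟨⟨c, hc⟩, hpx⟩
      have hc' : ∀ i, s i ∣ B.mulVec x i - c * B.mulVec y i := by
        intro i
        have := hc i
        rw [Matrix.mulVec_sub, Matrix.mulVec_smul] at this
        simpa using this
      rcases Int.even_or_odd c with ⟨q, hq⟩ | ⟨q, hq⟩
      · left
        refine ⟨fun i => ?_, hpx⟩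
        have : B.mulVec x i = (B.mulVec x i - c * B.mulVec y i) + q * (2 * B.mulVec y i) := by
          rw [hq]; ring
        rw [this]
        exact dvd_add (hc' i) ((h2y i).mul_left q)
      · right
        refine ⟨fun i => ?_, hpx⟩
        have : B.mulVec (x - y) i =
            (B.mulVec x i - c * B.mulVec y i) + q * (2 * B.mulVec y i) := by
          rw [Matrix.mulVec_sub, Pi.sub_apply, hq]; ring
        rw [this]
        exact dvd_add (hc' i) ((h2y i).mul_left q)
    · rintro x (⟨hx, hpx⟩ | ⟨hx, hpx⟩)
      · refine ⟨⟨0, fun i => ?_⟩, hpx⟩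
        simpa using hx i
      · refine ⟨⟨1, fun i => ?_⟩, hpx⟩
        simpa using hx i
  -- disjoint
  have hdisj : Disjoint SU SC := by
    rw [Set.disjoint_left]
    rintro x ⟨hx1, _⟩ ⟨hx2, _⟩
    apply hyn
    intro i
    have h3 : B.mulVec y i = B.mulVec x i - B.mulVec (x - y) i := by
      rw [Matrix.mulVec_sub, Pi.sub_apply]; ring
    rw [h3]
    exact dvd_sub (hx1 i) (hx2 i)
  -- finiteness
  have hfin : {x : Fin n → ℤ | p x}.Finite := aux_finite n M hMsymm hMpos a
  have hfinU : SU.Finite := hfin.subset fun x hx => hx.2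
  have hfinC : SC.Finite := hfin.subset fun x hx => hx.2
  -- card identities
  have hcardV : Nat.card {z : Fin n → ℤ // z ⬝ᵥ (Vᵀ * M * V).mulVec z = a} = SL.ncard := by
    have e1 : Nat.card {z : Fin n → ℤ // z ⬝ᵥ (Vᵀ * M * V).mulVec z = a} =
        Nat.card {z : Fin n → ℤ // p (V.mulVec z)} := by
      apply Nat.card_congr
      apply Equiv.subtypeEquivRight
      intro z
      rw [hp]
      simp only
      rw [aux_quad]
    rw [e1, aux_card_range V.mulVec hVinj p, hrangeV]
    rw [← Nat.card_coe_set_eq]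
    apply Nat.card_congr
    apply Equiv.subtypeEquivRight
    intro x
    rw [hSL]
    simp [Set.mem_setOf_eq]
  have hcardU : Nat.card {z : Fin n → ℤ // z ⬝ᵥ (Uᵀ * M * U).mulVec z = a} = SU.ncard := by
    have e1 : Nat.card {z : Fin n → ℤ // z ⬝ᵥ (Uᵀ * M * U).mulVec z = a} =
        Nat.card {z : Fin n → ℤ // p (U.mulVec z)} := by
      apply Nat.card_congr
      apply Equiv.subtypeEquivRight
      intro z
      rw [hp]
      simp only
      rw [aux_quad]
    rw [e1, aux_card_range U.mulVec hUinj p, hrangeU]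
    rw [← Nat.card_coe_set_eq]
    apply Nat.card_congr
    apply Equiv.subtypeEquivRight
    intro x
    rw [hSU]
    simp [Set.mem_setOf_eq]
  have hcardC : Nat.card {x : Fin n → ℤ //
      (∀ i, s i ∣ (B.mulVec x - w) i) ∧ x ⬝ᵥ M.mulVec x = a} = SC.ncard := by
    rw [← Nat.card_coe_set_eq]
    apply Nat.card_congr
    apply Equiv.subtypeEquivRight
    intro x
    rw [hSC]
    simp only [Set.mem_setOf_eq, hp]
    constructor
    · rintro ⟨h1, h2⟩
      refine ⟨fun i => ?_, h2⟩
      have h3 : B.mulVec (x - y) i = (B.mulVec x - w) i - (B.mulVec y - w) i := by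
        rw [Matrix.mulVec_sub]; simp [Pi.sub_apply]
      rw [h3]
      exact dvd_sub (h1 i) (hy i)
    · rintro ⟨h1, h2⟩
      refine ⟨fun i => ?_, h2⟩
      have h3 : (B.mulVec x - w) i = B.mulVec (x - y) i + (B.mulVec y - w) i := by
        rw [Matrix.mulVec_sub]; simp [Pi.sub_apply]
      rw [h3]
      exact dvd_add (h1 i) (hy i)
  have hsum : SL.ncard = SU.ncard + SC.ncard := by
    rw [hunion]
    exact Set.ncard_union_eq hdisj hfinU hfinC
  rw [hcardV, hcardU, hcardC, hsum]
  push_cast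
  ring
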